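/- Let H be a real Hilbert space, let Γ : H → ℝ^s be a continuous linear map, let Ů := ker Γ, and let (φ_i)_{i≥1} be a complete system in H. Set Ů^(N) := span{φ₁,…,φ_N} ∩ Ů. Let J : H → ℝ be continuous, strictly convex on Ů (i.e. J(t·u + (1−t)·v) < t·J(u) + (1−t)·J(v) for all distinct u, v ∈ Ů and t ∈ (0,1)), convex on H, and growing at infinity on Ů. Then J has a unique minimizer ū on Ů and a unique minimizer u^(N) on each Ů^(N), the whole sequence u^(N) converges weakly to ū (⟨u^(N), v⟩ → ⟨ū, v⟩ for every v ∈ H), and J(u^(N)) → J(ū). -/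

import Mathlib

open Filter Topology


lemma weak_compact {H : Type*} [NormedAddCommGroup H] [InnerProductSpace ℝ H] [CompleteSpace H]
    (φ : ℕ → H) (hcomplete : Dense (Submodule.span ℝ (φ '' {i | 1 ≤ i}) : Set H))
    (u : ℕ → H) (C : ℝ) (hC : 0 < C) (hb : ∀ n, ‖u n‖ ≤ C) :
    ∃ ψ : ℕ → ℕ, StrictMono ψ ∧ ∃ w : H,
      ∀ v : H, Tendsto (fun n => (inner ℝ (u (ψ n)) v : ℝ)) atTop (𝓝 (inner ℝ w v : ℝ)) := by
  -- compactness in the product space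
  set K : Set (ℕ → ℝ) := Set.univ.pi fun i => Set.Icc (-(C * ‖φ i‖)) (C * ‖φ i‖) with hK
  have hKc : IsCompact K := isCompact_univ_pi fun i => isCompact_Icc
  have hFK : ∀ n, (fun i => (inner ℝ (u n) (φ i) : ℝ)) ∈ K := by
    intro n i _
    have h1 : |(inner ℝ (u n) (φ i) : ℝ)| ≤ C * ‖φ i‖ :=
      (abs_real_inner_le_norm _ _).trans
        (mul_le_mul_of_nonneg_right (hb n) (norm_nonneg _))
    exact abs_le.mp h1
  obtain ⟨g, -, ψ, hψ, hg⟩ := hKc.isSeqCompact hFK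
  have hgi : ∀ i, Tendsto (fun n => (inner ℝ (u (ψ n)) (φ i) : ℝ)) atTop (𝓝 (g i)) := by
    intro i
    exact (tendsto_pi_nhds.mp hg) i
  refine ⟨ψ, hψ, ?_⟩
  -- convergence on the span
  have hspan : ∀ x ∈ Submodule.span ℝ (φ '' {i | 1 ≤ i}),
      ∃ L : ℝ, Tendsto (fun n => (inner ℝ (u (ψ n)) x : ℝ)) atTop (𝓝 L) := by
    intro x hx
    induction hx using Submodule.span_induction with
    | mem x hx =>
      obtain ⟨i, -, rfl⟩ := hx
      exact ⟨g i, hgi i⟩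
    | zero => exact ⟨0, by simpa using tendsto_const_nhds⟩
    | add x y _ _ hx hy =>
      obtain ⟨L1, h1⟩ := hx; obtain ⟨L2, h2⟩ := hy
      exact ⟨L1 + L2, by simpa [inner_add_right] using h1.add h2⟩
    | smul a x _ hx =>
      obtain ⟨L, h⟩ := hx
      exact ⟨a * L, by simpa [inner_smul_right] using h.const_mul a⟩
  -- Cauchy for every v
  have hcauchy : ∀ v : H, ∃ L : ℝ, Tendsto (fun n => (inner ℝ (u (ψ n)) v : ℝ)) atTop (𝓝 L) := by
    intro v
    apply cauchySeq_tendsto_of_complete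
    rw [Metric.cauchySeq_iff]
    intro ε hε
    have hε4 : 0 < ε / 4 / C := by positivity
    obtain ⟨x, hxs, hxv⟩ := Metric.mem_closure_iff.mp (hcomplete v) _ hε4
    obtain ⟨L, hL⟩ := hspan x hxs
    have hLc := hL.cauchySeq
    rw [Metric.cauchySeq_iff] at hLc
    obtain ⟨N, hN⟩ := hLc (ε / 2) (by positivity)
    refine ⟨N, fun m hm n hn => ?_⟩
    have key : ∀ k, |(inner ℝ (u (ψ k)) v : ℝ) - inner ℝ (u (ψ k)) x| ≤ ε / 4 := by
      intro k
      have : (inner ℝ (u (ψ k)) v : ℝ) - inner ℝ (u (ψ k)) x = inner ℝ (u (ψ k)) (v - x) := by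
        rw [inner_sub_right]
      rw [this]
      have h1 : |(inner ℝ (u (ψ k)) (v - x) : ℝ)| ≤ C * ‖v - x‖ :=
        (abs_real_inner_le_norm _ _).trans
          (mul_le_mul_of_nonneg_right (hb _) (norm_nonneg _))
      have h2 : ‖v - x‖ ≤ ε / 4 / C := by
        rw [← dist_eq_norm]
        exact (dist_comm v x ▸ hxv.le)
      calc |(inner ℝ (u (ψ k)) (v - x) : ℝ)| ≤ C * (ε / 4 / C) :=
            h1.trans (mul_le_mul_of_nonneg_left h2 hC.le)
        _ = ε / 4 := by field_simp
    have h3 := hN m hm n hn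
    have hd : dist (inner ℝ (u (ψ m)) v : ℝ) (inner ℝ (u (ψ n)) v : ℝ) ≤
        |(inner ℝ (u (ψ m)) v : ℝ) - inner ℝ (u (ψ m)) x| +
        dist (inner ℝ (u (ψ m)) x : ℝ) (inner ℝ (u (ψ n)) x : ℝ) +
        |(inner ℝ (u (ψ n)) v : ℝ) - inner ℝ (u (ψ n)) x| := by
      rw [Real.dist_eq, Real.dist_eq]
      have := abs_sub_abs_le_abs_sub ((inner ℝ (u (ψ m)) v : ℝ)) ((inner ℝ (u (ψ n)) v : ℝ))
      calc |(inner ℝ (u (ψ m)) v : ℝ) - inner ℝ (u (ψ n)) v| =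
          |((inner ℝ (u (ψ m)) v : ℝ) - inner ℝ (u (ψ m)) x) +
           ((inner ℝ (u (ψ m)) x : ℝ) - inner ℝ (u (ψ n)) x) +
           ((inner ℝ (u (ψ n)) x : ℝ) - inner ℝ (u (ψ n)) v)| := by ring_nf
        _ ≤ _ := by
          refine (abs_add_le _ _).trans ?_
          have := abs_add_le ((inner ℝ (u (ψ m)) v : ℝ) - inner ℝ (u (ψ m)) x)
            ((inner ℝ (u (ψ m)) x : ℝ) - inner ℝ (u (ψ n)) x)
          rw [abs_sub_comm ((inner ℝ (u (ψ n)) x : ℝ))]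
          linarith
    calc dist (inner ℝ (u (ψ m)) v : ℝ) (inner ℝ (u (ψ n)) v : ℝ) ≤ _ := hd
      _ < ε / 4 + ε / 2 + ε / 4 := by
          have := key m; have := key n; linarith
      _ = ε := by ring
  -- build the linear functional
  choose L hL using hcauchy
  have hadd : ∀ v w, L (v + w) = L v + L w := by
    intro v w
    refine tendsto_nhds_unique (hL (v + w)) ?_
    simpa [inner_add_right] using (hL v).add (hL w)
  have hsmul : ∀ (a : ℝ) v, L (a • v) = a * L v := by
    intro a v
    refine tendsto_nhds_unique (hL (a • v)) ?_
    simpa [inner_smul_right] using (hL v).const_mul a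
  have hbound : ∀ v, ‖L v‖ ≤ C * ‖v‖ := by
    intro v
    have : Tendsto (fun n => |(inner ℝ (u (ψ n)) v : ℝ)|) atTop (𝓝 |L v|) := (hL v).abs
    rw [Real.norm_eq_abs]
    refine le_of_tendsto this (Eventually.of_forall fun n => ?_)
    exact (abs_real_inner_le_norm _ _).trans
      (mul_le_mul_of_nonneg_right (hb _) (norm_nonneg _))
  let f : H →L[ℝ] ℝ := LinearMap.mkContinuous
    { toFun := L, map_add' := hadd, map_smul' := hsmul } C hbound
  refine ⟨(InnerProductSpace.toDual ℝ H).symm f, fun v => ?_⟩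
  have : (inner ℝ ((InnerProductSpace.toDual ℝ H).symm f) v : ℝ) = f v := by
    rw [← InnerProductSpace.toDual_apply_apply]
    simp
  rw [this]
  exact hL v


lemma weak_lsc {H : Type*} [NormedAddCommGroup H] [InnerProductSpace ℝ H] [CompleteSpace H]
    (J : H → ℝ) (hcont : Continuous J) (hconv : ConvexOn ℝ Set.univ J)
    (u : ℕ → H) (w : H)
    (hw : ∀ v : H, Tendsto (fun n => (inner ℝ (u n) v : ℝ)) atTop (𝓝 (inner ℝ w v : ℝ)))
    (c : ℝ) (hc : ∀ n, J (u n) ≤ c) : J w ≤ c := by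
  set S : Set H := closure (convexHull ℝ (Set.range u)) with hS
  have hwS : w ∈ S := by
    by_contra hwn
    obtain ⟨f, t, hfs, htf⟩ := geometric_hahn_banach_closed_point
      ((convex_convexHull ℝ _).closure) isClosed_closure hwn
    set z := (InnerProductSpace.toDual ℝ H).symm f with hz
    have hfz : ∀ x : H, f x = (inner ℝ x z : ℝ) := by
      intro x
      have : f = InnerProductSpace.toDual ℝ H z := by simp [hz]
      rw [this, InnerProductSpace.toDual_apply_apply, real_inner_comm]
    have hlim : Tendsto (fun n => f (u n)) atTop (𝓝 (f w)) := by
      simp_rw [hfz]; exact hw z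
    have hmem : ∀ n, u n ∈ S := fun n =>
      subset_closure (subset_convexHull ℝ _ (Set.mem_range_self n))
    have : f w ≤ t := le_of_tendsto hlim (Eventually.of_forall fun n => (hfs _ (hmem n)).le)
    linarith
  have hsub : S ⊆ {x | J x ≤ c} := by
    apply closure_minimal _ (isClosed_le hcont continuous_const)
    intro x hx
    obtain ⟨y, ⟨n, rfl⟩, hxy⟩ := hconv.exists_ge_of_mem_convexHull (Set.subset_univ _) hx
    exact hxy.trans (hc n)
  exact hsub hwS


set_option synthInstance.maxHeartbeats 1000000 in
lemma density_lemma {H : Type*} [NormedAddCommGroup H] [InnerProductSpace ℝ H] [CompleteSpace H]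
    (s : ℕ) (Γ : H →L[ℝ] EuclideanSpace ℝ (Fin s)) (φ : ℕ → H)
    (hcomplete : Dense (Submodule.span ℝ (φ '' {i | 1 ≤ i}) : Set H)) :
    ∀ u ∈ LinearMap.ker (Γ : H →ₗ[ℝ] EuclideanSpace ℝ (Fin s)), ∀ ε > (0:ℝ), ∃ N : ℕ, ∃ x ∈
      (Submodule.span ℝ (φ '' Set.Icc 1 N) ⊓ LinearMap.ker (Γ : H →ₗ[ℝ] EuclideanSpace ℝ (Fin s)) : Submodule ℝ H), ‖x - u‖ < ε := by
  classical
  set V : ℕ → Submodule ℝ H := fun N => Submodule.span ℝ (φ '' Set.Icc 1 N) with hV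
  have hVmono : Monotone V := fun a b hab =>
    Submodule.span_mono (Set.image_mono (Set.Icc_subset_Icc_right hab))
  have hdir : Directed (· ≤ ·) V := hVmono.directed_le
  set D : Submodule ℝ H := ⨆ N, V N with hD
  have hDcoe : (D : Set H) = ⋃ N, (V N : Set H) := Submodule.coe_iSup_of_directed V hdir
  have hsub : Submodule.span ℝ (φ '' {i | 1 ≤ i}) ≤ D := by
    rw [Submodule.span_le]
    rintro x ⟨i, hi, rfl⟩
    exact Submodule.mem_iSup_of_mem i (Submodule.subset_span ⟨i, ⟨hi, le_refl i⟩, rfl⟩)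
  have hDdense : Dense (D : Set H) := hcomplete.mono hsub
  -- the range of Γ equals the image of D
  set W : Submodule ℝ (EuclideanSpace ℝ (Fin s)) := LinearMap.range (Γ : H →ₗ[ℝ] EuclideanSpace ℝ (Fin s)) with hW
  set T : Submodule ℝ (EuclideanSpace ℝ (Fin s)) := Submodule.map (Γ : H →ₗ[ℝ] _) D with hT
  have hTclosed : IsClosed (T : Set (EuclideanSpace ℝ (Fin s))) :=
    Submodule.closed_of_finiteDimensional T
  have hWT : W ≤ T := by
    rintro y ⟨x, rfl⟩
    have hx : x ∈ closure (D : Set H) := hDdense x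
    have : Γ x ∈ closure (Γ '' (D : Set H)) :=
      (image_closure_subset_closure_image Γ.continuous) ⟨x, hx, rfl⟩
    have him : Γ '' (D : Set H) = (T : Set _) := by
      ext y; simp [hT, Submodule.mem_map]
    rw [him] at this
    rwa [hTclosed.closure_eq] at this
  -- basis of W with preimages in D
  have hWfin : FiniteDimensional ℝ W := inferInstance
  set b := Module.finBasis ℝ W with hb
  have hbel : ∀ j, ((b j : EuclideanSpace ℝ (Fin s))) ∈ T := fun j => hWT (b j).2
  choose d hdD hdΓ using fun j => (hbel j)
  -- coordinates
  set Γres : H →L[ℝ] W := Γ.codRestrict W (fun x => LinearMap.mem_range_self _ x) with hΓres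
  set c : _ → H →L[ℝ] ℝ := fun j =>
    (LinearMap.toContinuousLinearMap (b.coord j)).comp Γres with hc
  set Q : H → H := fun x => x - ∑ j, (c j x) • d j with hQ
  have hQcont : Continuous Q := by
    apply continuous_id.sub
    exact continuous_finset_sum _ fun j _ => ((c j).continuous).smul continuous_const
  have hQfix : ∀ x ∈ LinearMap.ker (Γ : H →ₗ[ℝ] EuclideanSpace ℝ (Fin s)), Q x = x := by
    intro x hx
    have hx' : Γ x = 0 := hx
    have : Γres x = 0 := by
      apply Subtype.ext; simp [hΓres, hx']
    simp [hQ, hc, this]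
  have hQker : ∀ x, Γ (Q x) = 0 := by
    intro x
    have hsum : ∑ j, (c j x) • (d j) ∈ Set.univ := trivial
    have key : Γ (∑ j, (c j x) • d j) = Γ x := by
      rw [map_sum]
      have : ∀ j, Γ ((c j x) • d j) = (c j x) • ((b j : EuclideanSpace ℝ (Fin s))) := by
        intro j; rw [map_smul]; congr 1; exact hdΓ j
      simp_rw [this]
      have hrepr := b.sum_repr (Γres x)
      have : ((∑ j, (b.repr (Γres x)) j • b j : W) : EuclideanSpace ℝ (Fin s)) =
          ((Γres x : W) : EuclideanSpace ℝ (Fin s)) := by rw [hrepr]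
      rw [Submodule.coe_sum] at this
      simp only [SetLike.val_smul] at this
      exact this
    simp [hQ, map_sub, key]
  -- Q maps D into some V N ⊓ ker Γ
  have hQD : ∀ x ∈ (D : Set H), ∃ N, Q x ∈ V N := by
    intro x hx
    rw [hDcoe] at hx
    obtain ⟨N₀, hN₀⟩ := Set.mem_iUnion.mp hx
    choose Nd hNd using fun j => Set.mem_iUnion.mp (by
      rw [← hDcoe] ; exact (hdD j) : d j ∈ ⋃ N, (V N : Set H))
    refine ⟨max N₀ (Finset.univ.sup Nd), ?_⟩
    apply Submodule.sub_mem
    · exact hVmono (le_max_left _ _) hN₀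
    · apply Submodule.sum_mem
      intro j _
      apply Submodule.smul_mem
      exact hVmono ((Finset.le_sup (Finset.mem_univ j)).trans (le_max_right _ _)) (hNd j)
  -- conclusion
  intro u hu ε hε
  have hQu : Q u = u := hQfix u hu
  have hQc : ContinuousAt Q u := hQcont.continuousAt
  rw [Metric.continuousAt_iff] at hQc
  obtain ⟨δ, hδ, hδ'⟩ := hQc ε hε
  obtain ⟨x, hxD, hxu⟩ := Metric.mem_closure_iff.mp (hDdense u) δ hδ
  obtain ⟨N, hQx⟩ := hQD x hxD
  refine ⟨N, Q x, ⟨hQx, hQker x⟩, ?_⟩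
  have := hδ' (show dist x u < δ by rwa [dist_comm])
  rwa [hQu, dist_eq_norm] at this


lemma exists_min_findim {H : Type*} [NormedAddCommGroup H] [InnerProductSpace ℝ H]
    (J : H → ℝ) (hcont : Continuous J)
    (U S : Submodule ℝ H) (hfin : FiniteDimensional ℝ S) (hSU : S ≤ U)
    (hgrow : ∀ M : ℝ, ∃ R > (0:ℝ), ∀ u ∈ U, R ≤ ‖u‖ → M ≤ J u) :
    ∃ x ∈ S, ∀ y ∈ S, J x ≤ J y := by
  obtain ⟨R, hR, hRg⟩ := hgrow (J 0 + 1)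
  haveI := hfin
  haveI : ProperSpace S := FiniteDimensional.proper ℝ S
  set K : Set S := {y : S | J y ≤ J 0 ∧ ‖(y : H)‖ ≤ R} with hK
  have hKclosed : IsClosed K := by
    apply IsClosed.inter
    · exact isClosed_le (hcont.comp continuous_subtype_val) continuous_const
    · exact isClosed_le (continuous_subtype_val.norm) continuous_const
  have hKbdd : Bornology.IsBounded K := by
    apply Bornology.IsBounded.subset (Metric.isBounded_closedBall (x := (0 : S)) (r := R))
    intro y hy
    simp only [Metric.mem_closedBall, dist_zero_right]
    exact hy.2
  have hKc : IsCompact K := Metric.isCompact_of_isClosed_isBounded hKclosed hKbdd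
  have h0K : (0 : S) ∈ K := ⟨by simp, by simp [hR.le]⟩
  obtain ⟨x, hxK, hxmin⟩ := hKc.exists_isMinOn ⟨0, h0K⟩
    ((hcont.comp continuous_subtype_val).continuousOn)
  refine ⟨x, x.2, ?_⟩
  intro y hy
  by_cases hJy : J y ≤ J 0
  · have hyR : ‖y‖ ≤ R := by
      by_contra hyR
      have := hRg y (hSU hy) (le_of_lt (lt_of_not_ge hyR))
      linarith
    exact isMinOn_iff.mp hxmin ⟨y, hy⟩ ⟨hJy, hyR⟩
  · have h1 : J x ≤ J 0 := (isMinOn_iff.mp hxmin _ h0K)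
    linarith [lt_of_not_ge hJy]

lemma bdd_below_ball {H : Type*} [NormedAddCommGroup H] [InnerProductSpace ℝ H]
    (J : H → ℝ) (hcont : Continuous J) (hconv : ConvexOn ℝ Set.univ J) (R : ℝ) :
    ∃ B : ℝ, ∀ x : H, ‖x‖ ≤ R → B ≤ J x := by
  obtain ⟨r, hr, hrc⟩ := Metric.continuousAt_iff.mp (hcont.continuousAt (x := 0)) 1 one_pos
  set r' : ℝ := r / 2 with hr'
  have hr'pos : 0 < r' := by positivity
  refine ⟨J 0 - (max R r') / r', ?_⟩
  intro x hx
  set t : ℝ := r' / max ‖x‖ r' with ht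
  have hmaxpos : 0 < max ‖x‖ r' := lt_of_lt_of_le hr'pos (le_max_right _ _)
  have htpos : 0 < t := by positivity
  have ht1 : t ≤ 1 := by
    rw [div_le_one hmaxpos]; exact le_max_right _ _
  have htx : ‖t • x‖ < r := by
    rw [norm_smul, Real.norm_eq_abs, abs_of_pos htpos]
    have h1 : t * ‖x‖ ≤ r' := by
      rw [ht, div_mul_eq_mul_div, div_le_iff₀ hmaxpos]
      exact mul_le_mul_of_nonneg_left (le_max_left _ _) hr'pos.le
    linarith
  have hJtx : J 0 - 1 < J (t • x) := by
    have := hrc (show dist (t • x) 0 < r by rwa [dist_zero_right])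
    rw [Real.dist_eq, abs_lt] at this
    linarith [this.1]
  have hconv' : J (t • x) ≤ t * J x + (1 - t) * J 0 := by
    have := hconv.2 (Set.mem_univ x) (Set.mem_univ 0) htpos.le (by linarith : (0:ℝ) ≤ 1 - t)
      (by ring)
    simpa using this
  have h1t : 1 / t = max ‖x‖ r' / r' := by
    rw [ht]; field_simp
  have h3 : t * J 0 - 1 ≤ t * J x := by nlinarith
  have h4 : t * (J 0 - 1 / t) ≤ t * J x := by
    have he : t * (J 0 - 1 / t) = t * J 0 - 1 := by field_simp
    rw [he]; linarith
  have h5 : J 0 - 1 / t ≤ J x := le_of_mul_le_mul_left h4 htpos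
  have h6 : 1 / t ≤ max R r' / r' := by
    rw [h1t]
    gcongr
  linarith

/-- Strictly convex case of Theorem 1 of the paper: if in addition `J` is strictly
convex on `Ů = ker Γ`, then the minimizers `ū` on `Ů` and `u⁽ᴺ⁾` on
`span{φ₁,…,φ_N} ∩ Ů` are unique, the whole sequence `u⁽ᴺ⁾` converges weakly to `ū`,
and `J (u⁽ᴺ⁾) → J ū`. -/
theorem stmt4 {H : Type*} [NormedAddCommGroup H] [InnerProductSpace ℝ H]
    [CompleteSpace H]
    (s : ℕ) (Γ : H →L[ℝ] EuclideanSpace ℝ (Fin s))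
    (φ : ℕ → H)
    (hcomplete : Dense (Submodule.span ℝ (φ '' {i | 1 ≤ i}) : Set H))
    (J : H → ℝ) (hcont : Continuous J)
    (hconv : ConvexOn ℝ Set.univ J)
    (U : Submodule ℝ H) (hUdef : U = LinearMap.ker (Γ : H →ₗ[ℝ] EuclideanSpace ℝ (Fin s)))
    (hstrict : ∀ u ∈ U, ∀ v ∈ U, u ≠ v → ∀ t : ℝ, 0 < t → t < 1 →
      J (t • u + (1 - t) • v) < t * J u + (1 - t) * J v)
    (UN : ℕ → Submodule ℝ H)
    (hUN : ∀ N, UN N = Submodule.span ℝ (φ '' Set.Icc 1 N) ⊓ U)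
    (hgrow : ∀ M : ℝ, ∃ R > (0:ℝ), ∀ u ∈ U, R ≤ ‖u‖ → M ≤ J u) :
    ∃ ub : H, (ub ∈ U ∧ ∀ u ∈ U, J ub ≤ J u) ∧
      (∀ w, (w ∈ U ∧ ∀ u ∈ U, J w ≤ J u) → w = ub) ∧
      ∃ uN : ℕ → H,
        (∀ N, (uN N ∈ UN N ∧ ∀ u ∈ UN N, J (uN N) ≤ J u) ∧
          (∀ w, (w ∈ UN N ∧ ∀ u ∈ UN N, J w ≤ J u) → w = uN N)) ∧
        (∀ v : H, Tendsto (fun N => (inner ℝ (uN N) v : ℝ)) atTop (𝓝 (inner ℝ ub v : ℝ))) ∧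
        Tendsto (fun N => J (uN N)) atTop (𝓝 (J ub)) := by
  classical
  have hUclosed : IsClosed (U : Set H) := by
    rw [hUdef]; exact ContinuousLinearMap.isClosed_ker Γ
  have hfin : ∀ N, FiniteDimensional ℝ (UN N) := by
    intro N
    haveI : FiniteDimensional ℝ (Submodule.span ℝ (φ '' Set.Icc 1 N)) :=
      FiniteDimensional.span_of_finite ℝ ((Set.finite_Icc 1 N).image φ)
    have hle : UN N ≤ Submodule.span ℝ (φ '' Set.Icc 1 N) := by
      rw [hUN N]; exact inf_le_left
    exact Submodule.finiteDimensional_of_le hle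
  have hUNU : ∀ N, UN N ≤ U := fun N => by rw [hUN N]; exact inf_le_right
  have hUNmono : Monotone UN := by
    intro a b hab
    rw [hUN a, hUN b]
    exact inf_le_inf (Submodule.span_mono
      (Set.image_mono (Set.Icc_subset_Icc_right hab))) le_rfl
  have hmin : ∀ N, ∃ x ∈ UN N, ∀ y ∈ UN N, J x ≤ J y := fun N =>
    exists_min_findim J hcont U (UN N) (hfin N) (hUNU N) hgrow
  choose uN huN huNmin using hmin
  -- uniqueness helper
  have uniq : ∀ (S : Submodule ℝ H), S ≤ U → ∀ x ∈ S, ∀ y ∈ S,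
      (∀ z ∈ S, J x ≤ J z) → (∀ z ∈ S, J y ≤ J z) → x = y := by
    intro S hSU x hx y hy hxm hym
    by_contra hne
    have hmid : (1/2 : ℝ) • x + (1 - 1/2 : ℝ) • y ∈ S :=
      S.add_mem (S.smul_mem _ hx) (S.smul_mem _ hy)
    have hs := hstrict x (hSU hx) y (hSU hy) hne (1/2) (by norm_num) (by norm_num)
    have h1 := hxm _ hmid
    have h2 : J x = J y := le_antisymm (hxm y hy) (hym x hx)
    linarith
  have hJanti : Antitone (fun N => J (uN N)) := antitone_nat_of_succ_le fun N =>
    huNmin (N+1) _ (hUNmono (Nat.le_succ N) (huN N))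
  have hJ0 : ∀ N, J (uN N) ≤ J 0 := fun N => huNmin N 0 (UN N).zero_mem
  obtain ⟨R₀, hR₀pos, hR₀⟩ := hgrow (J 0 + 1)
  have hbnd : ∀ N, ‖uN N‖ ≤ R₀ := by
    intro N
    by_contra h
    have := hR₀ (uN N) (hUNU N (huN N)) (le_of_lt (lt_of_not_ge h))
    linarith [hJ0 N]
  obtain ⟨B, hB⟩ := bdd_below_ball J hcont hconv R₀
  have hbdd : BddBelow (Set.range fun N => J (uN N)) :=
    ⟨B, by rintro _ ⟨N, rfl⟩; exact hB _ (hbnd N)⟩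
  set m : ℝ := ⨅ N, J (uN N) with hm
  have htendsm : Tendsto (fun N => J (uN N)) atTop (𝓝 m) := tendsto_atTop_ciInf hJanti hbdd
  have hmle : ∀ N, m ≤ J (uN N) := fun N => ciInf_le hbdd N
  have hminf : ∀ u ∈ U, m ≤ J u := by
    intro u hu
    refine le_of_forall_pos_le_add fun ε hε => ?_
    obtain ⟨δ, hδ, hδ'⟩ := Metric.continuousAt_iff.mp (hcont.continuousAt (x := u)) ε hε
    have hudef : u ∈ LinearMap.ker (Γ : H →ₗ[ℝ] EuclideanSpace ℝ (Fin s)) := hUdef ▸ hu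
    obtain ⟨N, x, hxUN, hxu⟩ := density_lemma s Γ φ hcomplete u hudef δ hδ
    have hxUN' : x ∈ UN N := by rw [hUN N, hUdef]; exact hxUN
    have hd : dist (J x) (J u) < ε := hδ' (by rwa [dist_eq_norm])
    rw [Real.dist_eq, abs_lt] at hd
    have h3 := huNmin N x hxUN'
    linarith [hmle N]
  -- key subsequence extraction
  have key : ∀ u : ℕ → H, (∀ n, u n ∈ U) → (∀ n, ‖u n‖ ≤ R₀) →
      Tendsto (fun n => J (u n)) atTop (𝓝 m) →
      ∃ w : H, w ∈ U ∧ J w ≤ m ∧ ∃ ψ : ℕ → ℕ, StrictMono ψ ∧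
        ∀ v : H, Tendsto (fun n => (inner ℝ (u (ψ n)) v : ℝ)) atTop (𝓝 (inner ℝ w v : ℝ)) := by
    intro u hu hubd hJu
    obtain ⟨ψ, hψ, w, hw⟩ := weak_compact φ hcomplete u R₀ hR₀pos hubd
    haveI : CompleteSpace U := hUclosed.completeSpace_coe
    have hwU : w ∈ U := by
      rw [← Submodule.orthogonal_orthogonal U, Submodule.mem_orthogonal]
      intro v hv
      have h0 : ∀ n, (inner ℝ (u (ψ n)) v : ℝ) = 0 := fun n =>
        (Submodule.mem_orthogonal U v).mp hv _ (hu _)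
      have hwv : (inner ℝ w v : ℝ) = 0 := by
        have := hw v
        simp_rw [h0] at this
        exact (tendsto_nhds_unique tendsto_const_nhds this).symm
      rw [real_inner_comm]; exact hwv
    have hJw : J w ≤ m := by
      refine le_of_forall_pos_le_add fun ε hε => ?_
      have hJψ : Tendsto (fun n => J (u (ψ n))) atTop (𝓝 m) := hJu.comp hψ.tendsto_atTop
      have hev : ∀ᶠ n in atTop, J (u (ψ n)) < m + ε :=
        hJψ.eventually (Filter.Tendsto.eventually_lt_const (by linarith) tendsto_id)
      obtain ⟨K0, hK0⟩ := eventually_atTop.mp hev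
      refine weak_lsc J hcont hconv (fun k => u (ψ (k + K0))) w
        (fun v => (hw v).comp (tendsto_add_atTop_nat K0)) (m + ε)
        (fun k => (hK0 (k + K0) (Nat.le_add_left _ _)).le)
    exact ⟨w, hwU, hJw, ψ, hψ, hw⟩
  obtain ⟨ub, hubU, hubm, ψ₀, hψ₀, hubw⟩ := key uN (fun n => hUNU n (huN n)) hbnd htendsm
  have hubmin : ∀ u ∈ U, J ub ≤ J u := fun u hu => hubm.trans (hminf u hu)
  have hJub : J ub = m := le_antisymm hubm (hminf ub hubU)
  refine ⟨ub, ⟨hubU, hubmin⟩, ?_, uN, ?_, ?_, ?_⟩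
  · rintro w ⟨hwU, hwmin⟩
    exact uniq U le_rfl w hwU ub hubU hwmin hubmin
  · intro N
    refine ⟨⟨huN N, huNmin N⟩, ?_⟩
    rintro w ⟨hwUN, hwmin⟩
    exact uniq (UN N) (hUNU N) w hwUN (uN N) (huN N) hwmin (huNmin N)
  · intro v
    apply tendsto_of_subseq_tendsto
    intro ns hns
    have hJns : Tendsto (fun n => J (uN (ns n))) atTop (𝓝 m) := htendsm.comp hns
    obtain ⟨w, hwU, hJw, ψ, hψ, hw⟩ := key (fun n => uN (ns n))
      (fun n => hUNU _ (huN _)) (fun n => hbnd _) hJns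
    have hweq : w = ub := uniq U le_rfl w hwU ub hubU
      (fun z hz => (hJw.trans (hminf z hz))) hubmin
    exact ⟨ψ, by rw [← hweq]; exact hw v⟩
  · rw [hJub]
    exact htendsm
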